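/- arXiv:2412.20228 — 9 statements merged into one kernel-verified Lean document; each statement's English description precedes it below -/
import Mathlib

section
/- Let M ≥ 1, let ξ_1 ≤ ξ_2 ≤ … ≤ ξ_M be a nondecreasing sequence of real numbers, let v̂_1,…,v̂_M be arbitrary real numbers, and let (ṽ_1,…,ṽ_M) be an isotonic regression of (v̂_1,…,v̂_M). Then max_{1≤j≤M} |ṽ_j − ξ_j| ≤ max_{1≤j≤M} |v̂_j − ξ_j|. -/
lemma clip_sq_aux (a x lo hi : ℝ) (h1 : lo ≤ a) (h2 : a ≤ hi) :
    (a - max lo (min x hi))^2 ≤ (a - x)^2 ∧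
      ((x < lo ∨ hi < x) → (a - max lo (min x hi))^2 < (a - x)^2) := by
  rcases lt_or_ge x lo with h | h
  · have hmin : min x hi = x := min_eq_left (by linarith)
    have hmax : max lo x = lo := max_eq_left (by linarith)
    rw [hmin, hmax]
    constructor
    · nlinarith
    · intro _; nlinarith
  rcases lt_or_ge hi x with h' | h'
  · have hmin : min x hi = hi := min_eq_right (by linarith)
    have hmax : max lo hi = hi := max_eq_right (by linarith)
    rw [hmin, hmax]
    constructor
    · nlinarith
    · intro _; nlinarith
  · have hmin : min x hi = x := min_eq_left h'
    have hmax : max lo x = x := max_eq_right h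
    rw [hmin, hmax]
    refine ⟨le_refl _, ?_⟩
    rintro (h'' | h'') <;> linarith

/-- Lemma 3.1: applying isotonic regression to noisy estimates of a nondecreasing
sequence never increases the maximal absolute error. -/
theorem isotonic_regression_sup_error_le
    (M : ℕ) (hM : 1 ≤ M)
    (ξ : Fin M → ℝ) (hξ : Monotone ξ)
    (vh w : Fin M → ℝ)
    (hw_mono : Monotone w)
    (hw_min : ∀ w' : Fin M → ℝ, Monotone w' →
      ∑ j, (vh j - w j) ^ 2 ≤ ∑ j, (vh j - w' j) ^ 2) :
    (Finset.univ.sup' ⟨⟨0, hM⟩, Finset.mem_univ _⟩ fun j => |w j - ξ j|) ≤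
      Finset.univ.sup' ⟨⟨0, hM⟩, Finset.mem_univ _⟩ fun j => |vh j - ξ j| := by
  set ε := Finset.univ.sup' ⟨⟨0, hM⟩, Finset.mem_univ _⟩ fun j => |vh j - ξ j| with hε
  have hbd : ∀ j : Fin M, |vh j - ξ j| ≤ ε := by
    intro j; rw [hε]; exact Finset.le_sup' (fun j => |vh j - ξ j|) (Finset.mem_univ j)
  set w' : Fin M → ℝ := fun j => max (ξ j - ε) (min (w j) (ξ j + ε)) with hw'
  have hw'_mono : Monotone w' := by
    intro i k hik
    exact max_le_max (by linarith [hξ hik]) (min_le_min (hw_mono hik) (by linarith [hξ hik]))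
  have hpt : ∀ j : Fin M, (vh j - w' j)^2 ≤ (vh j - w j)^2 ∧
      ((w j < ξ j - ε ∨ ξ j + ε < w j) → (vh j - w' j)^2 < (vh j - w j)^2) := by
    intro j
    have := abs_le.mp (hbd j)
    exact clip_sq_aux (vh j) (w j) (ξ j - ε) (ξ j + ε) (by linarith [this.2]) (by linarith [this.1])
  apply Finset.sup'_le
  intro j _
  by_contra hc
  push_neg at hc
  have hj : w j < ξ j - ε ∨ ξ j + ε < w j := by
    rcases lt_abs.mp hc with h | h
    · right; linarith
    · left; linarith
  have hsum : ∑ i, (vh i - w' i) ^ 2 < ∑ i, (vh i - w i) ^ 2 := by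
    apply Finset.sum_lt_sum (fun i _ => (hpt i).1)
    exact ⟨j, Finset.mem_univ j, (hpt j).2 hj⟩
  exact absurd (hw_min w' hw'_mono) (not_le.mpr hsum)
end

section
/- Let k ≥ 1 and let ξ_1 ≤ ξ_2 ≤ … ≤ ξ_k be a nondecreasing sequence of real numbers. Let a, c, b be real numbers with a > c > b. Then max_{1≤j≤k} |c − ξ_j| < max(|a − ξ_1|, |b − ξ_k|). -/
/-- Key per-block inequality in the proof of Lemma 3.1: on a level set of the
isotonic regression with common fitted value `c`, where the first original value `a`
and last original value `b` satisfy `a > c > b`, the maximal deviation of the constant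
fit `c` from the nondecreasing target sequence `ξ` is strictly smaller than the larger
of the endpoint deviations of `a` and `b`. -/
theorem block_max_deviation_lt
    (k : ℕ) (hk : 1 ≤ k)
    (ξ : Fin k → ℝ) (hξ : Monotone ξ)
    (a c b : ℝ) (hac : a > c) (hcb : c > b) :
    (Finset.univ.sup' ⟨⟨0, hk⟩, Finset.mem_univ _⟩ fun j => |c - ξ j|) <
      max (|a - ξ ⟨0, hk⟩|) (|b - ξ ⟨k - 1, by omega⟩|) := by
  refine (Finset.sup'_lt_iff _).mpr ?_
  intro j _
  rcases le_or_gt (ξ j) c with h | h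
  · refine lt_max_of_lt_left ?_
    have h0 : ξ ⟨0, hk⟩ ≤ ξ j := hξ (Fin.le_def.mpr (Nat.zero_le _))
    have : |c - ξ j| = c - ξ j := abs_of_nonneg (by linarith)
    rw [this]
    calc c - ξ j ≤ c - ξ ⟨0, hk⟩ := by linarith
      _ < a - ξ ⟨0, hk⟩ := by linarith
      _ ≤ |a - ξ ⟨0, hk⟩| := le_abs_self _
  · refine lt_max_of_lt_right ?_
    have h0 : ξ j ≤ ξ ⟨k - 1, by omega⟩ := hξ (Fin.le_def.mpr (by have := j.2; simp; omega))
    have : |c - ξ j| = ξ j - c := abs_of_neg (by linarith) |>.trans (by ring)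
    rw [this]
    calc ξ j - c ≤ ξ ⟨k - 1, by omega⟩ - c := by linarith
      _ < ξ ⟨k - 1, by omega⟩ - b := by linarith
      _ ≤ |b - ξ ⟨k - 1, by omega⟩| := by rw [abs_sub_comm]; exact le_abs_self _
end

section
/- Let ε > 0, let p_1 < p_2 < … < p_M be real numbers (M ≥ 2), and let f : [p_1, p_M] → ℝ be nondecreasing with f(p_{j+1}) − f(p_j) ≤ ε for each j ∈ {1,…,M−1}. Let v_1,…,v_M be arbitrary real numbers and let g be the linear interpolant of the values v_j at the points p_j. Then sup_{p∈[p_1,p_M]} |g(p) − f(p)| ≤ 2ε + 3·max_{1≤j≤M} |v_j − f(p_j)|. -/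
/-- The deterministic bound (2ε + 3·sup) from the proof of Theorem 3.2(ii): if `f` is
nondecreasing with consecutive increments at most `ε` along the grid `p 0 < … < p (M-1)`,
then the linear interpolant `g` of arbitrary values `v j` satisfies
`|g x - f x| ≤ 2ε + 3·max_j |v j - f (p j)|` on `[p 0, p (M-1)]`. -/
theorem linear_interpolant_error_le_two_eps_add_three_max
    (ε : ℝ) (hε : 0 < ε)
    (M : ℕ) (hM : 2 ≤ M)
    (p : ℕ → ℝ) (hp : ∀ j, j + 1 < M → p j < p (j + 1))
    (f : ℝ → ℝ)
    (hf : MonotoneOn f (Set.Icc (p 0) (p (M - 1))))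
    (hgap : ∀ j, j + 1 < M → f (p (j + 1)) - f (p j) ≤ ε)
    (v : ℕ → ℝ)
    (g : ℝ → ℝ)
    (hg : ∀ j, j + 1 < M → ∀ x ∈ Set.Icc (p j) (p (j + 1)),
      g x = v j + (x - p j) * (v (j + 1) - v j) / (p (j + 1) - p j)) :
    ∀ x ∈ Set.Icc (p 0) (p (M - 1)),
      |g x - f x| ≤ 2 * ε + 3 * ((Finset.range M).sup'
        (Finset.nonempty_range_iff.mpr (by omega)) fun j => |v j - f (p j)|) := by
  intro x hx
  set D := (Finset.range M).sup'
      (Finset.nonempty_range_iff.mpr (by omega)) (fun j => |v j - f (p j)|) with hD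
  -- monotonicity of p on indices
  have pmono : ∀ a b : ℕ, a ≤ b → b < M → p a ≤ p b := by
    intro a b hab hb
    induction b with
    | zero => simp [Nat.le_zero.mp hab]
    | succ n ih =>
      rcases Nat.lt_or_ge a (n + 1) with h | h
      · exact le_trans (ih (Nat.lt_succ_iff.mp h) (by omega)) (le_of_lt (hp n hb))
      · have : a = n + 1 := le_antisymm hab h
        simp [this]
  obtain ⟨hx0, hx1⟩ := hx
  -- find the interval containing x
  have key : ∃ j, j + 1 < M ∧ p j ≤ x ∧ x ≤ p (j + 1) := by
    classical
    set j := Nat.findGreatest (fun j => p j ≤ x) (M - 2) with hj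
    have hjle : j ≤ M - 2 := Nat.findGreatest_le _
    have hjM : j + 1 < M := by omega
    have hpj : p j ≤ x := Nat.findGreatest_spec (P := fun j => p j ≤ x) (Nat.zero_le _) hx0
    refine ⟨j, hjM, hpj, ?_⟩
    by_cases hje : j = M - 2
    · have : j + 1 = M - 1 := by omega
      rw [this]; exact hx1
    · have hlt : j < M - 2 := lt_of_le_of_ne hjle hje
      have h1 : Nat.findGreatest (fun j => p j ≤ x) (M - 2) < j + 1 := by
        rw [← hj]; omega
      have h2 : j + 1 ≤ M - 2 := by omega
      have := Nat.findGreatest_is_greatest h1 h2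
      exact le_of_not_ge this
  obtain ⟨j, hjM, hpj, hpj1⟩ := key
  have hd : (0 : ℝ) < p (j + 1) - p j := sub_pos.mpr (hp j hjM)
  have hgx := hg j hjM x ⟨hpj, hpj1⟩
  -- D bounds
  have hDj : |v j - f (p j)| ≤ D := by
    have hjm : j ∈ Finset.range M := Finset.mem_range.mpr (by omega)
    exact Finset.le_sup' (fun j => |v j - f (p j)|) hjm
  have hDj1 : |v (j + 1) - f (p (j + 1))| ≤ D := by
    have hjm : j + 1 ∈ Finset.range M := Finset.mem_range.mpr (by omega)
    exact Finset.le_sup' (fun j => |v j - f (p j)|) hjm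
  have hD0 : 0 ≤ D := le_trans (abs_nonneg _) hDj
  -- memberships in big interval
  have hmemj : p j ∈ Set.Icc (p 0) (p (M - 1)) :=
    ⟨pmono 0 j (Nat.zero_le _) (by omega), pmono j (M - 1) (by omega) (by omega)⟩
  have hmemj1 : p (j + 1) ∈ Set.Icc (p 0) (p (M - 1)) :=
    ⟨pmono 0 (j + 1) (Nat.zero_le _) (by omega), pmono (j + 1) (M - 1) (by omega) (by omega)⟩
  -- f bounds
  have hfl : f (p j) ≤ f x := hf hmemj ⟨hx0, hx1⟩ hpj
  have hfu : f x ≤ f (p (j + 1)) := hf ⟨hx0, hx1⟩ hmemj1 hpj1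
  have hgap' := hgap j hjM
  -- bounds on g x via convex combination
  have habsj : v j - f (p j) ≤ D ∧ f (p j) - v j ≤ D := by
    constructor
    · exact le_trans (le_abs_self _) hDj
    · calc f (p j) - v j ≤ |f (p j) - v j| := le_abs_self _
        _ = |v j - f (p j)| := abs_sub_comm _ _
        _ ≤ D := hDj
  have habsj1 : v (j + 1) - f (p (j + 1)) ≤ D ∧ f (p (j + 1)) - v (j + 1) ≤ D := by
    constructor
    · exact le_trans (le_abs_self _) hDj1
    · calc f (p (j + 1)) - v (j + 1) ≤ |f (p (j + 1)) - v (j + 1)| := le_abs_self _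
        _ = |v (j + 1) - f (p (j + 1))| := abs_sub_comm _ _
        _ ≤ D := hDj1
  have hnum0 : (0 : ℝ) ≤ x - p j := sub_nonneg.mpr hpj
  have hnum1 : x - p j ≤ p (j + 1) - p j := by linarith
  have hgle : g x ≤ max (v j) (v (j + 1)) := by
    rw [hgx]
    rcases le_total (v j) (v (j + 1)) with h | h
    · rw [max_eq_right h]
      have : (x - p j) * (v (j + 1) - v j) / (p (j + 1) - p j) ≤ v (j + 1) - v j := by
        rw [div_le_iff₀ hd]; nlinarith
      linarith
    · rw [max_eq_left h]
      have : (x - p j) * (v (j + 1) - v j) / (p (j + 1) - p j) ≤ 0 :=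
        div_nonpos_of_nonpos_of_nonneg
          (mul_nonpos_of_nonneg_of_nonpos hnum0 (by linarith)) (le_of_lt hd)
      linarith
  have hgge : min (v j) (v (j + 1)) ≤ g x := by
    rw [hgx]
    rcases le_total (v j) (v (j + 1)) with h | h
    · rw [min_eq_left h]
      have : (0 : ℝ) ≤ (x - p j) * (v (j + 1) - v j) / (p (j + 1) - p j) :=
        div_nonneg (mul_nonneg hnum0 (by linarith)) (le_of_lt hd)
      linarith
    · rw [min_eq_right h]
      have : v (j + 1) - v j ≤ (x - p j) * (v (j + 1) - v j) / (p (j + 1) - p j) := by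
        rw [le_div_iff₀ hd]; nlinarith
      linarith
  -- combine
  have hub : g x - f x ≤ ε + D := by
    have h1 : max (v j) (v (j + 1)) ≤ f (p (j + 1)) + D := by
      apply max_le
      · linarith [habsj.1]
      · linarith [habsj1.1]
    linarith
  have hlb : f x - g x ≤ ε + D := by
    have h1 : f (p j) - D ≤ min (v j) (v (j + 1)) := by
      apply le_min
      · linarith [habsj.2]
      · linarith [habsj1.2]
    linarith
  rw [abs_sub_le_iff]
  constructor <;> linarith
end

section
/- For every τ > 0 and every u ∈ ℝ, |f_τ(u) − |u|| ≤ τ·log 2, and the bound is attained at u = 0, i.e. f_τ(0) − |0| = τ·log 2. Consequently, for every sequence τ_n → 0⁺, the functions f_{τ_n} converge uniformly on ℝ to the absolute value function. -/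
/-- Hutson's smooth approximation of the absolute value. -/
noncomputable def gSmooth (τ u : ℝ) : ℝ :=
  τ * (Real.log (Real.exp (-u / τ) + 1) + Real.log (Real.exp (u / τ) + 1))

/-- The hyperbolic-tangent smooth approximation of the absolute value. -/
noncomputable def hSmooth (τ u : ℝ) : ℝ := u * Real.tanh (u / τ)

/-- The mixed smooth approximation `f_τ = (g_τ + h_τ)/2` of the absolute value. -/
noncomputable def fSmooth (τ u : ℝ) : ℝ := (gSmooth τ u + hSmooth τ u) / 2

lemma fSmooth_even (τ u : ℝ) : fSmooth τ (-u) = fSmooth τ u := by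
  unfold fSmooth gSmooth hSmooth
  rw [show -u / τ = -(u / τ) by ring, show (- -u) / τ = u / τ by ring, Real.tanh_neg]
  ring

lemma log_one_add_ge (s : ℝ) (h0 : 0 ≤ s) (h1 : s ≤ 1) : s / 2 ≤ Real.log (1 + s) := by
  have hp : (0:ℝ) < 1 + s := by linarith
  have := Real.log_le_sub_one_of_pos (x := (1 + s)⁻¹) (by positivity)
  rw [Real.log_inv] at this
  have h2 : 1 - (1 + s)⁻¹ ≤ Real.log (1 + s) := by linarith
  have h3 : s / 2 ≤ 1 - (1 + s)⁻¹ := by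
    rw [inv_eq_one_div, le_sub_iff_add_le, div_add_div _ _ (by norm_num) hp.ne',
      div_le_one (by positivity)]
    nlinarith
  linarith

lemma mul_exp_neg_le (x : ℝ) (hx : 0 ≤ x) : x * Real.exp (-x) ≤ 1 / 2 := by
  have h1 : x ≤ Real.exp (x - 1) := by
    have := Real.add_one_le_exp (x - 1); linarith
  have h2 : x * Real.exp (-x) ≤ Real.exp (x - 1) * Real.exp (-x) := by
    apply mul_le_mul_of_nonneg_right h1 (Real.exp_pos _).le
  rw [← Real.exp_add] at h2
  have h3 : Real.exp (x - 1 + -x) = (Real.exp 1)⁻¹ := by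
    rw [show x - 1 + -x = -1 by ring, Real.exp_neg]
  have h4 : (Real.exp 1)⁻¹ ≤ 1 / 2 := by
    rw [inv_le_comm₀ (Real.exp_pos _) (by norm_num)]
    calc ((1:ℝ)/2)⁻¹ = 2 := by norm_num
    _ ≤ Real.exp 1 := by have := Real.exp_one_gt_d9; linarith
  rw [h3] at h2; linarith

lemma fSmooth_sub_bounds (τ : ℝ) (hτ : 0 < τ) (u : ℝ) (hu : 0 ≤ u) :
    0 ≤ fSmooth τ u - u ∧ fSmooth τ u - u ≤ τ * Real.log 2 := by
  set x := u / τ with hxdef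
  have hx : 0 ≤ x := div_nonneg hu hτ.le
  have hu' : u = τ * x := by rw [hxdef]; field_simp [hτ.ne']
  have hE : (0:ℝ) < Real.exp (-x) := Real.exp_pos _
  have hD : (0:ℝ) < Real.exp x + Real.exp (-x) := by positivity
  have e1 : Real.log (Real.exp x + 1) = x + Real.log (1 + Real.exp (-x)) := by
    have : Real.exp x + 1 = Real.exp x * (1 + Real.exp (-x)) := by
      rw [mul_add, mul_one, ← Real.exp_add]; simp
    rw [this, Real.log_mul (Real.exp_ne_zero _) (by positivity), Real.log_exp]
  have e2 : Real.tanh x = (Real.exp x - Real.exp (-x)) / (Real.exp x + Real.exp (-x)) := by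
    rw [Real.tanh_eq_sinh_div_cosh, Real.sinh_eq, Real.cosh_eq]
    field_simp
  have key : fSmooth τ u - u
      = τ * (Real.log (1 + Real.exp (-x))
        - x * Real.exp (-x) / (Real.exp x + Real.exp (-x))) := by
    unfold fSmooth gSmooth hSmooth
    rw [show -u / τ = -(u / τ) by ring, ← hxdef, e1, e2, add_comm (Real.exp (-x)) 1]
    rw [hu']
    field_simp
    ring
  constructor
  · rw [key]
    have b1 : x * Real.exp (-x) / (Real.exp x + Real.exp (-x))
        ≤ x * Real.exp (-x) / Real.exp x := by
      apply div_le_div_of_nonneg_left (by positivity) (Real.exp_pos _)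
      linarith
    have b2 : x * Real.exp (-x) / Real.exp x ≤ Real.exp (-x) / 2 := by
      rw [div_le_div_iff₀ (Real.exp_pos _) (by norm_num)]
      have h1 := mul_exp_neg_le x hx
      have h2 : Real.exp (-x) * Real.exp x = 1 := by rw [← Real.exp_add]; simp
      nlinarith [Real.exp_pos (-x)]
    have b3 : Real.exp (-x) / 2 ≤ Real.log (1 + Real.exp (-x)) :=
      log_one_add_ge _ hE.le (Real.exp_le_one_iff.mpr (neg_nonpos.mpr hx))
    have : 0 ≤ Real.log (1 + Real.exp (-x))
        - x * Real.exp (-x) / (Real.exp x + Real.exp (-x)) := by linarith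
    positivity
  · rw [key]
    apply mul_le_mul_of_nonneg_left _ hτ.le
    have b1 : Real.log (1 + Real.exp (-x)) ≤ Real.log 2 := by
      apply Real.log_le_log (by positivity)
      have : Real.exp (-x) ≤ 1 := Real.exp_le_one_iff.mpr (neg_nonpos.mpr hx)
      linarith
    have b2 : 0 ≤ x * Real.exp (-x) / (Real.exp x + Real.exp (-x)) := by positivity
    linarith

lemma fSmooth_abs_bound (τ : ℝ) (hτ : 0 < τ) (u : ℝ) :
    abs (fSmooth τ u - |u|) ≤ τ * Real.log 2 := by
  rcases le_total 0 u with hu | hu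
  · rw [abs_of_nonneg hu]
    obtain ⟨h1, h2⟩ := fSmooth_sub_bounds τ hτ u hu
    rw [abs_of_nonneg h1]; exact h2
  · rw [abs_of_nonpos hu, ← fSmooth_even τ u]
    obtain ⟨h1, h2⟩ := fSmooth_sub_bounds τ hτ (-u) (by linarith)
    rw [abs_of_nonneg h1]; exact h2

lemma fSmooth_zero (τ : ℝ) : fSmooth τ 0 = τ * Real.log 2 := by
  unfold fSmooth gSmooth hSmooth
  norm_num
  ring

/-- `|f_τ(u) − |u|| ≤ τ·log 2` for all `u`, with equality (as a signed error) at `u = 0`;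
consequently `f_{τ_n}` converges uniformly on `ℝ` to the absolute value whenever
`τ_n → 0⁺`. Used in the proof of Theorem 3.4. -/
theorem fSmooth_uniform_approx :
    (∀ τ : ℝ, 0 < τ →
      (∀ u : ℝ, abs (fSmooth τ u - |u|) ≤ τ * Real.log 2) ∧
      fSmooth τ 0 - |(0 : ℝ)| = τ * Real.log 2) ∧
    (∀ τ : ℕ → ℝ, (∀ n, 0 < τ n) → Filter.Tendsto τ Filter.atTop (nhds 0) →
      TendstoUniformly (fun n u => fSmooth (τ n) u) (fun u => |u|) Filter.atTop) := by
  constructor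
  · intro τ hτ
    exact ⟨fSmooth_abs_bound τ hτ, by simp [fSmooth_zero]⟩
  · intro τ hpos hlim
    rw [Metric.tendstoUniformly_iff]
    intro ε hε
    have hmul : Filter.Tendsto (fun n => τ n * Real.log 2) Filter.atTop (nhds 0) := by
      simpa using hlim.mul_const (Real.log 2)
    have hev : ∀ᶠ n in Filter.atTop, τ n * Real.log 2 < ε :=
      hmul.eventually_lt_const hε
    filter_upwards [hev] with n hn u
    have := fSmooth_abs_bound (τ n) (hpos n) u
    rw [Real.dist_eq, abs_sub_comm]
    linarith
end

section
/- For every τ > 0 and every u ∈ ℝ, the function h_τ(u) = u·tanh(u/τ) underestimates the absolute value: u·tanh(u/τ) ≤ |u|, and the error is uniformly small: |u| − u·tanh(u/τ) ≤ τ/e. -/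
lemma tanh_le_one' (x : ℝ) : Real.tanh x ≤ 1 := by
  rw [Real.tanh_eq_sinh_div_cosh]
  have hc := Real.cosh_pos x
  rw [div_le_one hc]
  nlinarith [Real.cosh_sub_sinh x, Real.exp_pos (-x)]

lemma neg_one_le_tanh (x : ℝ) : -1 ≤ Real.tanh x := by
  rw [Real.tanh_eq_sinh_div_cosh]
  have hc := Real.cosh_pos x
  rw [le_div_iff₀ hc]
  nlinarith [Real.sinh_add_cosh x, Real.exp_pos x]

lemma key (x : ℝ) (hx : 0 ≤ x) : x * (1 - Real.tanh x) ≤ 1 / Real.exp 1 := by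
  have hc := Real.cosh_pos x
  have h1 : 1 - Real.tanh x = Real.exp (-x) / Real.cosh x := by
    rw [Real.tanh_eq_sinh_div_cosh, ← Real.cosh_sub_sinh]
    field_simp
  have h2 : Real.exp x / 2 ≤ Real.cosh x := by
    rw [Real.cosh_eq]
    nlinarith [Real.exp_pos (-x)]
  have h3 : Real.exp (-x) / Real.cosh x ≤ 2 * Real.exp (-x) / Real.exp x := by
    rw [div_le_div_iff₀ hc (Real.exp_pos x)]
    nlinarith [Real.exp_pos (-x)]
  have h4 : x * (2 * Real.exp (-x) / Real.exp x) = 2 * x / Real.exp (2 * x) := by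
    have e1 : Real.exp (2 * x) = Real.exp x * Real.exp x := by
      rw [← Real.exp_add]; ring_nf
    have e2 : Real.exp (-x) * Real.exp x = 1 := by
      rw [← Real.exp_add]; simp
    field_simp [e1]
    rw [mul_comm x 2, e1]
    linear_combination x * Real.exp x * e2
  have h5 : 2 * x / Real.exp (2 * x) ≤ 1 / Real.exp 1 := by
    rw [div_le_div_iff₀ (Real.exp_pos _) (Real.exp_pos _)]
    have := Real.add_one_le_exp (2 * x - 1)
    have h6 : Real.exp (2 * x - 1) * Real.exp 1 = Real.exp (2 * x) := by
      rw [← Real.exp_add]; ring_nf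
    nlinarith [Real.exp_pos 1, Real.exp_pos (2*x - 1)]
  calc x * (1 - Real.tanh x) ≤ x * (2 * Real.exp (-x) / Real.exp x) := by
        rw [h1]; exact mul_le_mul_of_nonneg_left h3 hx
    _ = 2 * x / Real.exp (2 * x) := h4
    _ ≤ 1 / Real.exp 1 := h5

lemma main_nonneg (τ : ℝ) (hτ : 0 < τ) (u : ℝ) (hu : 0 ≤ u) :
    hSmooth τ u ≤ |u| ∧ |u| - hSmooth τ u ≤ τ / Real.exp 1 := by
  rw [abs_of_nonneg hu]
  constructor
  · calc hSmooth τ u ≤ u * 1 := mul_le_mul_of_nonneg_left (tanh_le_one' _) hu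
      _ = u := mul_one u
  · have hx : 0 ≤ u / τ := div_nonneg hu hτ.le
    have := key (u / τ) hx
    have huτ : u = τ * (u / τ) := by field_simp
    have : τ * ((u/τ) * (1 - Real.tanh (u/τ))) ≤ τ * (1 / Real.exp 1) :=
      mul_le_mul_of_nonneg_left this hτ.le
    unfold hSmooth
    calc u - u * Real.tanh (u/τ) = τ * ((u/τ) * (1 - Real.tanh (u/τ))) := by
          field_simp
      _ ≤ τ * (1 / Real.exp 1) := this
      _ = τ / Real.exp 1 := by ring

/-- `h_τ(u) = u·tanh(u/τ)` underestimates the absolute value, with uniformly small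
error: `u·tanh(u/τ) ≤ |u|` and `|u| − u·tanh(u/τ) ≤ τ/e`. -/
theorem hSmooth_underestimates (τ : ℝ) (hτ : 0 < τ) (u : ℝ) :
    hSmooth τ u ≤ |u| ∧ |u| - hSmooth τ u ≤ τ / Real.exp 1 := by
  rcases le_or_gt 0 u with hu | hu
  · exact main_nonneg τ hτ u hu
  · have heven : hSmooth τ u = hSmooth τ (-u) := by
      unfold hSmooth
      rw [neg_div, Real.tanh_neg]; ring
    have habs : |u| = |-u| := (abs_neg u).symm
    rw [heven, habs]
    exact main_nonneg τ hτ (-u) (by linarith)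
end

section
/- Let α ∈ ℝ, β > 0, κ > 0 and r > 0 with rβ < 1. Then the function p ↦ exp(rα)·(p/(1−p))^{rβ}·exp(rβκp) is integrable on (0,1) and ∫₀¹ exp(rα)·(p/(1−p))^{rβ}·exp(rβκp) dp = exp(rα) · (π·rβ / sin(π·rβ)) · Σ_{n=0}^∞ [(1+rβ)_n / ((2)_n · n!)] · (rβκ)^n, where the series on the right converges. -/
open MeasureTheory

private lemma gamma_rising (a : ℝ) (ha : 0 < a) (n : ℕ) :
    Real.Gamma (a + n) = Real.Gamma a * ∏ i ∈ Finset.range n, (a + i) := by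
  induction n with
  | zero => simp
  | succ n ih =>
    have h1 : a + ((n : ℕ) + 1 : ℕ) = (a + n) + 1 := by push_cast; ring
    rw [h1, Real.Gamma_add_one (by positivity), ih, Finset.prod_range_succ]
    ring

private lemma realBeta {u v : ℝ} (hu : -1 < u) (hv : -1 < v) :
    IntegrableOn (fun x : ℝ => x ^ u * (1 - x) ^ v) (Set.Ioo 0 1) ∧
    ∫ x in Set.Ioo (0:ℝ) 1, x ^ u * (1 - x) ^ v
      = Real.Gamma (u + 1) * Real.Gamma (v + 1) / Real.Gamma (u + v + 2) := by
  have ha : (0:ℝ) < u + 1 := by linarith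
  have hb : (0:ℝ) < v + 1 := by linarith
  have ha' : 0 < Complex.re ((u + 1 : ℝ) : ℂ) := by simpa using ha
  have hb' : 0 < Complex.re ((v + 1 : ℝ) : ℂ) := by simpa using hb
  have hconv := Complex.betaIntegral_convergent ha' hb'
  have heq : ∀ x ∈ Set.Icc (0:ℝ) 1,
      (x : ℂ) ^ (((u + 1 : ℝ) : ℂ) - 1) * (1 - (x:ℂ)) ^ (((v + 1 : ℝ) : ℂ) - 1)
        = ((x ^ u * (1 - x) ^ v : ℝ) : ℂ) := by
    intro x hx
    rw [Complex.ofReal_mul, Complex.ofReal_cpow hx.1 u,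
      Complex.ofReal_cpow (by linarith [hx.2] : (0:ℝ) ≤ 1 - x) v]
    push_cast
    ring_nf
  constructor
  · have hIoc : IntegrableOn (fun x : ℝ =>
        (x : ℂ) ^ (((u + 1 : ℝ) : ℂ) - 1) * (1 - (x:ℂ)) ^ (((v + 1 : ℝ) : ℂ) - 1))
        (Set.Ioc 0 1) := by
      rwa [intervalIntegrable_iff_integrableOn_Ioc_of_le (by norm_num)] at hconv
    have hre : IntegrableOn (fun x : ℝ =>
        Complex.re ((x : ℂ) ^ (((u + 1 : ℝ) : ℂ) - 1) * (1 - (x:ℂ)) ^ (((v + 1 : ℝ) : ℂ) - 1)))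
        (Set.Ioc 0 1) := hIoc.re
    have : IntegrableOn (fun x : ℝ => x ^ u * (1 - x) ^ v) (Set.Ioc 0 1) := by
      refine hre.congr_fun (fun x hx => ?_) measurableSet_Ioc
      dsimp only
      rw [heq x ⟨hx.1.le, hx.2⟩, Complex.ofReal_re]
    exact this.mono_set Set.Ioo_subset_Ioc_self
  · have hGpos : 0 < Real.Gamma (u + v + 2) := Real.Gamma_pos_of_pos (by linarith)
    have hbeta : Complex.betaIntegral ((u+1:ℝ):ℂ) ((v+1:ℝ):ℂ)
        = ((∫ x in Set.Ioo (0:ℝ) 1, x ^ u * (1 - x) ^ v : ℝ) : ℂ) := by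
      rw [Complex.betaIntegral]
      rw [intervalIntegral.integral_congr (g := fun x : ℝ => ((x ^ u * (1 - x) ^ v : ℝ) : ℂ))
        (by intro x hx; exact heq x (by rwa [Set.uIcc_of_le (by norm_num : (0:ℝ) ≤ 1)] at hx))]
      rw [intervalIntegral.integral_ofReal]
      norm_cast
      rw [intervalIntegral.integral_of_le (by norm_num : (0:ℝ) ≤ 1),
        MeasureTheory.integral_Ioc_eq_integral_Ioo]
    have key := Complex.Gamma_mul_Gamma_eq_betaIntegral ha' hb'
    rw [hbeta] at key
    have hsum : ((u+1:ℝ):ℂ) + ((v+1:ℝ):ℂ) = ((u+v+2 : ℝ) : ℂ) := by push_cast; ring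
    rw [hsum, Complex.Gamma_ofReal, Complex.Gamma_ofReal, Complex.Gamma_ofReal] at key
    have key2 : Real.Gamma (u+1) * Real.Gamma (v+1)
        = Real.Gamma (u+v+2) * ∫ x in Set.Ioo (0:ℝ) 1, x ^ u * (1 - x) ^ v := by
      exact_mod_cast key
    field_simp
    linarith [key2]

/-- Lemma 4.1 of the paper: for `rβ < 1` the `r`-th moment of `EFLD(α,β,κ)`, i.e.
`∫₀¹ exp(rα)·(p/(1−p))^{rβ}·exp(rβκp) dp`, is finite and equals
`exp(rα)·₁F₁(1+rβ, 2; rβκ)·π·rβ/sin(π·rβ)`, where the confluent hypergeometric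
series `₁F₁` is written via rising factorials. -/
theorem efld_moment_formula
    (α β κ r : ℝ) (hβ : 0 < β) (hκ : 0 < κ) (hr : 0 < r) (hrβ : r * β < 1) :
    IntegrableOn
      (fun p : ℝ => Real.exp (r * α) * (p / (1 - p)) ^ (r * β) * Real.exp (r * β * κ * p))
      (Set.Ioo 0 1) ∧
    Summable (fun n : ℕ =>
      (∏ i ∈ Finset.range n, (1 + r * β + (i : ℝ))) /
        ((∏ i ∈ Finset.range n, ((2 : ℝ) + (i : ℝ))) * (n.factorial : ℝ)) *
        (r * β * κ) ^ n) ∧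
    ∫ p in Set.Ioo (0 : ℝ) 1,
        Real.exp (r * α) * (p / (1 - p)) ^ (r * β) * Real.exp (r * β * κ * p) =
      Real.exp (r * α) * (Real.pi * (r * β) / Real.sin (Real.pi * (r * β))) *
        ∑' n : ℕ,
          (∏ i ∈ Finset.range n, (1 + r * β + (i : ℝ))) /
            ((∏ i ∈ Finset.range n, ((2 : ℝ) + (i : ℝ))) * (n.factorial : ℝ)) *
            (r * β * κ) ^ n := by
  set s := r * β with hs_def
  have hs0 : 0 < s := mul_pos hr hβ
  have hs1 : s < 1 := hrβ
  set c := s * κ with hc_def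
  have hc : 0 < c := mul_pos hs0 hκ
  set E := Real.exp (r * α) with hE_def
  have hE : 0 < E := Real.exp_pos _
  have hsin : 0 < Real.sin (Real.pi * s) :=
    Real.sin_pos_of_pos_of_lt_pi (by positivity)
      (by nlinarith [Real.pi_pos])
  set K := Real.pi * s / Real.sin (Real.pi * s) with hK_def
  have hKpos : 0 < K := by positivity
  have hApos : ∀ n : ℕ, 0 < ∏ i ∈ Finset.range n, (1 + s + (i:ℝ)) :=
    fun n => Finset.prod_pos fun i _ => by positivity
  have hBpos : ∀ n : ℕ, 0 < ∏ i ∈ Finset.range n, ((2:ℝ) + (i:ℝ)) :=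
    fun n => Finset.prod_pos fun i _ => by positivity
  have hAB : ∀ n : ℕ, (∏ i ∈ Finset.range n, (1 + s + (i:ℝ)))
      ≤ ∏ i ∈ Finset.range n, ((2:ℝ) + (i:ℝ)) :=
    fun n => Finset.prod_le_prod (fun i _ => by positivity) (fun i _ => by linarith)
  have hfacpos : ∀ n : ℕ, (0:ℝ) < (n.factorial : ℝ) :=
    fun n => by exact_mod_cast n.factorial_pos
  -- the target series terms
  have hTnonneg : ∀ n : ℕ, (0:ℝ) ≤
      (∏ i ∈ Finset.range n, (1 + s + (i:ℝ))) /
        ((∏ i ∈ Finset.range n, ((2:ℝ) + (i:ℝ))) * (n.factorial : ℝ)) * c ^ n :=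
    fun n => mul_nonneg (div_nonneg (hApos n).le
      (mul_nonneg (hBpos n).le (hfacpos n).le)) (pow_nonneg hc.le n)
  have hT : Summable (fun n : ℕ =>
      (∏ i ∈ Finset.range n, (1 + s + (i:ℝ))) /
        ((∏ i ∈ Finset.range n, ((2:ℝ) + (i:ℝ))) * (n.factorial : ℝ)) * c ^ n) := by
    refine Summable.of_nonneg_of_le hTnonneg (fun n => ?_)
      (Real.summable_pow_div_factorial c)
    have h1 : (∏ i ∈ Finset.range n, (1 + s + (i:ℝ))) /
        ((∏ i ∈ Finset.range n, ((2:ℝ) + (i:ℝ))) * (n.factorial : ℝ)) * c ^ n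
        = ((∏ i ∈ Finset.range n, (1 + s + (i:ℝ))) / (∏ i ∈ Finset.range n, ((2:ℝ) + (i:ℝ))))
          * (c ^ n / (n.factorial : ℝ)) := by
      field_simp
    rw [h1]
    calc ((∏ i ∈ Finset.range n, (1 + s + (i:ℝ))) / (∏ i ∈ Finset.range n, ((2:ℝ) + (i:ℝ))))
          * (c ^ n / (n.factorial : ℝ))
        ≤ 1 * (c ^ n / (n.factorial : ℝ)) := by
          apply mul_le_mul_of_nonneg_right _ (by positivity)
          exact (div_le_one (hBpos n)).2 (hAB n)
      _ = c ^ n / (n.factorial : ℝ) := one_mul _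
  -- reflection formula
  have hK : Real.Gamma (1 + s) * Real.Gamma (1 - s) = K := by
    rw [show (1:ℝ) + s = s + 1 by ring, Real.Gamma_add_one hs0.ne', mul_assoc,
      Real.Gamma_mul_Gamma_one_sub, hK_def]
    ring
  -- beta integral values
  have hv : (-1:ℝ) < -s := by linarith
  have hu : ∀ n : ℕ, (-1:ℝ) < s + (n:ℝ) := fun n => by
    have : (0:ℝ) ≤ (n:ℝ) := n.cast_nonneg
    linarith
  have hG2 : Real.Gamma 2 = 1 := by
    rw [show (2:ℝ) = 1 + 1 by norm_num, Real.Gamma_add_one one_ne_zero, Real.Gamma_one, mul_one]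
  have hI : ∀ n : ℕ, ∫ x in Set.Ioo (0:ℝ) 1, x ^ (s + (n:ℝ)) * (1-x) ^ (-s)
      = K * ((∏ i ∈ Finset.range n, (1 + s + (i:ℝ))) / ∏ i ∈ Finset.range n, ((2:ℝ) + (i:ℝ))) := by
    intro n
    rw [(realBeta (hu n) hv).2]
    rw [show s + (n:ℝ) + 1 = (1 + s) + (n:ℕ) by push_cast; ring,
      show -s + 1 = 1 - s by ring,
      show s + (n:ℝ) + -s + 2 = 2 + (n:ℕ) by push_cast; ring,
      gamma_rising (1+s) (by linarith) n, gamma_rising 2 (by norm_num) n, hG2, one_mul, ← hK]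
    ring
  -- the summand functions
  set G : ℕ → ℝ → ℝ := fun n p =>
    (E * (c ^ n / (n.factorial : ℝ))) * (p ^ (s + (n:ℝ)) * (1-p) ^ (-s)) with hG_def
  have hGint : ∀ n : ℕ, IntegrableOn (G n) (Set.Ioo 0 1) :=
    fun n => ((realBeta (hu n) hv).1).const_mul _
  have hGval : ∀ n : ℕ, ∫ p in Set.Ioo (0:ℝ) 1, G n p
      = (E * K) * ((∏ i ∈ Finset.range n, (1 + s + (i:ℝ))) /
          ((∏ i ∈ Finset.range n, ((2:ℝ) + (i:ℝ))) * (n.factorial : ℝ)) * c ^ n) := by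
    intro n
    have hstep : ∫ p in Set.Ioo (0:ℝ) 1, G n p
        = (E * (c ^ n / (n.factorial : ℝ))) *
          ∫ p in Set.Ioo (0:ℝ) 1, p ^ (s + (n:ℝ)) * (1-p) ^ (-s) := by
      simp only [hG_def]
      exact integral_const_mul _ _
    rw [hstep, hI n]
    field_simp
  -- pointwise series expansion
  have hpt : Set.EqOn (fun p : ℝ => E * (p / (1 - p)) ^ s * Real.exp (c * p))
      (fun p : ℝ => ∑' n : ℕ, G n p) (Set.Ioo 0 1) := by
    intro p hp
    have hp0 : 0 < p := hp.1
    have h1p : 0 < 1 - p := by linarith [hp.2]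
    have hexp : Real.exp (c * p) = ∑' n : ℕ, (c*p) ^ n / (n.factorial : ℝ) := by
      rw [Real.exp_eq_exp_ℝ, NormedSpace.exp_eq_tsum_div]
    have hterm : ∀ n : ℕ, G n p
        = (E * (p ^ s * (1-p) ^ (-s))) * ((c*p) ^ n / (n.factorial : ℝ)) := by
      intro n
      rw [hG_def]
      simp only
      rw [mul_pow, Real.rpow_add hp0, Real.rpow_natCast]
      ring
    simp only
    rw [tsum_congr hterm, tsum_mul_left, ← hexp, Real.div_rpow hp0.le h1p.le,
      Real.rpow_neg h1p.le, div_eq_mul_inv]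
  -- measurability / lintegral bound for the swap
  have hGm : ∀ n : ℕ, AEStronglyMeasurable (G n) (volume.restrict (Set.Ioo (0:ℝ) 1)) :=
    fun n => (hGint n).aestronglyMeasurable
  have hlint : ∀ n : ℕ, ∫⁻ p in Set.Ioo (0:ℝ) 1, ‖G n p‖₊
      = ENNReal.ofReal ((E * K) * ((∏ i ∈ Finset.range n, (1 + s + (i:ℝ))) /
          ((∏ i ∈ Finset.range n, ((2:ℝ) + (i:ℝ))) * (n.factorial : ℝ)) * c ^ n)) := by
    intro n
    change ∫⁻ p in Set.Ioo (0:ℝ) 1, ‖G n p‖ₑ = _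
    rw [← MeasureTheory.ofReal_integral_norm_eq_lintegral_enorm (hGint n)]
    congr 1
    rw [← hGval n]
    refine setIntegral_congr_fun measurableSet_Ioo fun x hx => ?_
    exact Real.norm_of_nonneg (mul_nonneg (by positivity)
      (mul_nonneg (Real.rpow_nonneg hx.1.le _) (Real.rpow_nonneg (by linarith [hx.2]) _)))
  have hne : ∑' n : ℕ, ∫⁻ p in Set.Ioo (0:ℝ) 1, ‖G n p‖₊ ≠ ⊤ := by
    simp only [hlint]
    rw [← ENNReal.ofReal_tsum_of_nonneg
      (fun n => mul_nonneg (by positivity) (hTnonneg n)) (hT.mul_left _)]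
    exact ENNReal.ofReal_ne_top
  have hswap := MeasureTheory.integral_tsum hGm hne
  -- integrability of the full integrand
  have hbound : IntegrableOn (fun x : ℝ => (E * Real.exp c) * (x ^ s * (1-x) ^ (-s)))
      (Set.Ioo 0 1) := ((realBeta (by linarith : (-1:ℝ) < s) hv).1).const_mul _
  have hFcont : ContinuousOn (fun p : ℝ => E * (p / (1 - p)) ^ s * Real.exp (c * p))
      (Set.Ioo 0 1) := by
    have c1 : ContinuousOn (fun p : ℝ => p / (1 - p)) (Set.Ioo 0 1) :=
      ContinuousOn.div continuousOn_id (continuousOn_const.sub continuousOn_id)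
        (fun x hx => by simp only [Set.mem_Ioo] at hx; intro h; linarith [sub_eq_zero.mp h])
    have c2 := c1.rpow_const (fun x hx => Or.inr hs0.le)
    exact (continuousOn_const.mul c2).mul
      ((Real.continuous_exp.comp (continuous_const.mul continuous_id)).continuousOn)
  have hFint : IntegrableOn (fun p : ℝ => E * (p / (1 - p)) ^ s * Real.exp (c * p))
      (Set.Ioo 0 1) := by
    refine Integrable.mono' hbound (hFcont.aestronglyMeasurable measurableSet_Ioo) ?_
    refine (ae_restrict_iff' measurableSet_Ioo).2 (ae_of_all _ fun x hx => ?_)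
    have hx0 : 0 < x := hx.1
    have hx1 : 0 < 1 - x := by linarith [hx.2]
    have hdiv : (x / (1-x)) ^ s = x ^ s * (1-x) ^ (-s) := by
      rw [Real.div_rpow hx0.le hx1.le, Real.rpow_neg hx1.le, div_eq_mul_inv]
    have hrn : (0:ℝ) ≤ x ^ s * (1-x) ^ (-s) :=
      mul_nonneg (Real.rpow_nonneg hx0.le _) (Real.rpow_nonneg hx1.le _)
    rw [Real.norm_of_nonneg (mul_nonneg (mul_nonneg hE.le (Real.rpow_nonneg
      (by positivity) _)) (Real.exp_pos _).le), hdiv]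
    have hexple : Real.exp (c * x) ≤ Real.exp c := Real.exp_le_exp.2 (by nlinarith [hx.2])
    calc E * (x ^ s * (1-x) ^ (-s)) * Real.exp (c * x)
        ≤ E * (x ^ s * (1-x) ^ (-s)) * Real.exp c :=
          mul_le_mul_of_nonneg_left hexple (mul_nonneg hE.le hrn)
      _ = (E * Real.exp c) * (x ^ s * (1-x) ^ (-s)) := by ring
  refine ⟨hFint, hT, ?_⟩
  rw [setIntegral_congr_fun measurableSet_Ioo hpt, hswap, tsum_congr hGval, tsum_mul_left]
end

section
/- Let α ∈ ℝ, β > 0, κ > 0 and r > 0 with rβ ≥ 1. Then the function p ↦ exp(rα)·(p/(1−p))^{rβ}·exp(rβκp) is not integrable on (0,1); equivalently, ∫₀¹ exp(rα)·(p/(1−p))^{rβ}·exp(rβκp) dp = +∞. -/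
open MeasureTheory

lemma efld_aux_inv_top :
    ∫⁻ x in Set.Ioo (0 : ℝ) (1/2), ENNReal.ofReal (x⁻¹) = ⊤ := by
  by_contra h
  have hint : IntegrableOn (fun x : ℝ => x⁻¹) (Set.Ioo (0 : ℝ) (1/2)) := by
    refine ⟨measurable_inv.aestronglyMeasurable, ?_⟩
    rw [hasFiniteIntegral_iff_ofReal]
    · exact lt_top_iff_ne_top.2 h
    · filter_upwards [ae_restrict_mem measurableSet_Ioo] with x hx
      exact (inv_pos.2 hx.1).le
  have h2 : IntegrableOn (fun x : ℝ => x ^ (-1 : ℝ)) (Set.Ioo (0 : ℝ) (1/2)) := by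
    refine hint.congr_fun (fun x hx => ?_) measurableSet_Ioo
    rw [Real.rpow_neg_one]
  have := (intervalIntegral.integrableOn_Ioo_rpow_iff (by norm_num : (0:ℝ) < 1/2)).1 h2
  linarith

lemma efld_aux_one_sub_inv_top :
    ∫⁻ p in Set.Ioo (1/2 : ℝ) 1, ENNReal.ofReal ((1 - p)⁻¹) = ⊤ := by
  have hmp : MeasurePreserving (fun t : ℝ => 1 - t) volume volume :=
    Measure.measurePreserving_sub_left volume 1
  have hemb : MeasurableEmbedding (fun t : ℝ => 1 - t) :=
    (MeasurableEquiv.subLeft (1 : ℝ)).measurableEmbedding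
  have hpre : (fun t : ℝ => 1 - t) ⁻¹' Set.Ioo (0 : ℝ) (1/2) = Set.Ioo (1/2 : ℝ) 1 := by
    ext x
    simp only [Set.mem_preimage, Set.mem_Ioo]
    constructor <;> rintro ⟨h1, h2⟩ <;> constructor <;> linarith
  have := hmp.setLIntegral_comp_preimage_emb hemb
    (fun y => ENNReal.ofReal (y⁻¹)) (Set.Ioo (0 : ℝ) (1/2))
  rw [hpre] at this
  rw [this, efld_aux_inv_top]

/-- Second assertion of Lemma 4.1: for `rβ ≥ 1` the `r`-th moment of `EFLD(α,β,κ)` is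
infinite, i.e. the integrand is not integrable on `(0,1)` and its (lower Lebesgue)
integral is `+∞`. -/
theorem efld_moment_infinite
    (α β κ r : ℝ) (hβ : 0 < β) (hκ : 0 < κ) (hr : 0 < r) (hrβ : 1 ≤ r * β) :
    ¬ IntegrableOn
        (fun p : ℝ => Real.exp (r * α) * (p / (1 - p)) ^ (r * β) * Real.exp (r * β * κ * p))
        (Set.Ioo 0 1) ∧
    ∫⁻ p in Set.Ioo (0 : ℝ) 1,
        ENNReal.ofReal
          (Real.exp (r * α) * (p / (1 - p)) ^ (r * β) * Real.exp (r * β * κ * p)) = ⊤ := by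
  set c : ℝ := Real.exp (r * α) / 2 with hc
  have hcpos : 0 < c := by positivity
  -- pointwise lower bound on Ioo (1/2) 1
  have hbound : ∀ p ∈ Set.Ioo (1/2 : ℝ) 1,
      c * (1 - p)⁻¹ ≤
        Real.exp (r * α) * (p / (1 - p)) ^ (r * β) * Real.exp (r * β * κ * p) := by
    intro p hp
    obtain ⟨hp1, hp2⟩ := hp
    have hu : (0 : ℝ) < 1 - p := by linarith
    have hbase : (1 : ℝ) ≤ p / (1 - p) := (one_le_div hu).2 (by linarith)
    have hA : p / (1 - p) ≤ (p / (1 - p)) ^ (r * β) := by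
      have := Real.rpow_le_rpow_of_exponent_le hbase hrβ
      rwa [Real.rpow_one] at this
    have hB : (1/2 : ℝ) * (1 - p)⁻¹ ≤ p / (1 - p) := by
      rw [div_eq_mul_inv]
      exact mul_le_mul_of_nonneg_right (by linarith) (inv_nonneg.2 hu.le)
    have hC : (1 : ℝ) ≤ Real.exp (r * β * κ * p) := by
      apply Real.one_le_exp
      have : (0 : ℝ) < r * β * κ * p := by positivity
      linarith
    have he : (0 : ℝ) < Real.exp (r * α) := Real.exp_pos _
    have hX : (1/2 : ℝ) * (1 - p)⁻¹ ≤ (p / (1 - p)) ^ (r * β) := hB.trans hA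
    have hXnonneg : (0 : ℝ) ≤ (p / (1 - p)) ^ (r * β) := by positivity
    calc c * (1 - p)⁻¹ = Real.exp (r * α) * ((1/2) * (1 - p)⁻¹) := by ring
      _ ≤ Real.exp (r * α) * (p / (1 - p)) ^ (r * β) :=
          mul_le_mul_of_nonneg_left hX he.le
      _ = Real.exp (r * α) * (p / (1 - p)) ^ (r * β) * 1 := by ring
      _ ≤ Real.exp (r * α) * (p / (1 - p)) ^ (r * β) * Real.exp (r * β * κ * p) :=
          mul_le_mul_of_nonneg_left hC (by positivity)
  have htop : ∫⁻ p in Set.Ioo (0 : ℝ) 1,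
      ENNReal.ofReal
        (Real.exp (r * α) * (p / (1 - p)) ^ (r * β) * Real.exp (r * β * κ * p)) = ⊤ := by
    rw [eq_top_iff]
    have hsub : Set.Ioo (1/2 : ℝ) 1 ⊆ Set.Ioo (0 : ℝ) 1 := by
      intro x hx; exact ⟨by linarith [hx.1], hx.2⟩
    refine le_trans ?_ (lintegral_mono_set hsub)
    have hmono : ∫⁻ p in Set.Ioo (1/2 : ℝ) 1, ENNReal.ofReal c * ENNReal.ofReal ((1 - p)⁻¹) ≤
        ∫⁻ p in Set.Ioo (1/2 : ℝ) 1,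
          ENNReal.ofReal
            (Real.exp (r * α) * (p / (1 - p)) ^ (r * β) * Real.exp (r * β * κ * p)) := by
      apply lintegral_mono_ae
      filter_upwards [ae_restrict_mem measurableSet_Ioo] with p hp
      rw [← ENNReal.ofReal_mul hcpos.le]
      exact ENNReal.ofReal_le_ofReal (hbound p hp)
    refine le_trans (le_of_eq ?_) hmono
    rw [lintegral_const_mul' _ _ ENNReal.ofReal_ne_top, efld_aux_one_sub_inv_top,
      ENNReal.mul_top (by simpa using hcpos)]
  refine ⟨fun hInt => ?_, htop⟩
  exact absurd htop hInt.lintegral_lt_top.ne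
end

section
/- Let α ∈ ℝ, β > 0, κ > 0. Then the function p ↦ α + β(log(p/(1−p)) + κp) is integrable on (0,1) and ∫₀¹ [α + β(log(p/(1−p)) + κp)] dp = α + βκ/2. -/
open MeasureTheory

lemma intervalIntegrable_log01 : IntervalIntegrable Real.log volume 0 1 := by
  rw [intervalIntegrable_iff_integrableOn_Ioo_of_le zero_le_one]
  have h : IntegrableOn Real.log (Set.Ioc (0:ℝ) 1) volume := by
    refine integrableOn_Ioc_of_intervalIntegral_norm_bounded_left
      (I := 1) (a := fun n : ℕ => 1 / (n + 1)) (b := 1) (l := Filter.atTop)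
      (fun n => ?_) tendsto_one_div_add_atTop_nhds_zero_nat ?_
    · have hpos : (0:ℝ) < 1 / (n + 1) := by positivity
      have := intervalIntegral.intervalIntegrable_log (a := 1/(n+1)) (b := 1) (μ := volume)
        (Set.notMem_uIcc_of_lt hpos one_pos)
      rcases le_or_gt (1 / ((n:ℝ) + 1)) 1 with h | h
      · exact (intervalIntegrable_iff_integrableOn_Ioc_of_le h).1 this
      · have he : Set.Ioc (1/((n:ℝ)+1)) 1 = ∅ := Set.Ioc_eq_empty (not_lt.2 h.le)
        rw [he]; exact integrableOn_empty
    · filter_upwards [Filter.eventually_ge_atTop 1] with n hn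
      have hpos : (0:ℝ) < 1 / (n + 1) := by positivity
      have hle : 1 / ((n:ℝ) + 1) ≤ 1 := by
        rw [div_le_one (by positivity)]
        have : (1:ℝ) ≤ (n:ℝ) := by exact_mod_cast hn
        linarith
      set a := 1 / ((n:ℝ) + 1)
      have hnorm : ∀ x ∈ Set.Ioc a 1, ‖Real.log x‖ = -Real.log x := by
        intro x hx
        rw [Real.norm_eq_abs, abs_of_nonpos (Real.log_nonpos (le_of_lt (hpos.trans_le hx.1.le)) hx.2)]
      rw [setIntegral_congr_fun measurableSet_Ioc hnorm]
      have : ∫ x in Set.Ioc a 1, -Real.log x = -∫ x in a..1, Real.log x := by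
        rw [intervalIntegral.integral_of_le hle, integral_neg]
      rw [this, integral_log]
      have hloga : Real.log a ≤ 0 := Real.log_nonpos hpos.le hle
      simp only [Real.log_one]
      nlinarith [mul_nonpos_of_nonneg_of_nonpos hpos.le hloga]
  exact h.mono_set Set.Ioo_subset_Ioc_self

/-- The mean of the flattened logistic distribution `FLD(α,β,κ)`: the quantile function
`p ↦ α + β(log(p/(1−p)) + κp)` is integrable on `(0,1)` with integral `α + βκ/2`
(Section 4.1 of the paper). -/
theorem fld_mean
    (α β κ : ℝ) (hβ : 0 < β) (hκ : 0 < κ) :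
    IntegrableOn (fun p : ℝ => α + β * (Real.log (p / (1 - p)) + κ * p)) (Set.Ioo 0 1) ∧
    ∫ p in Set.Ioo (0 : ℝ) 1, (α + β * (Real.log (p / (1 - p)) + κ * p)) =
      α + β * κ / 2 := by
  have h1 : IntervalIntegrable Real.log volume 0 1 := intervalIntegrable_log01
  have h2 : IntervalIntegrable (fun p : ℝ => Real.log (1 - p)) volume 0 1 := by
    have := (intervalIntegrable_log01.comp_sub_left 1)
    simpa using this.symm
  have hg : IntervalIntegrable
      (fun p : ℝ => α + β * (Real.log p - Real.log (1 - p) + κ * p)) volume 0 1 := by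
    apply IntervalIntegrable.add intervalIntegrable_const
    exact (((h1.sub h2).add
      ((continuous_const.mul continuous_id).intervalIntegrable 0 1)).const_mul β)
  have hcongr : Set.EqOn (fun p : ℝ => α + β * (Real.log (p / (1 - p)) + κ * p))
      (fun p : ℝ => α + β * (Real.log p - Real.log (1 - p) + κ * p)) (Set.Ioo 0 1) := by
    intro p hp
    have h1p : (1:ℝ) - p ≠ 0 := by have := hp.2; intro h; linarith [sub_eq_zero.1 h]
    simp only [Real.log_div (ne_of_gt hp.1) h1p]
  have hgOn : IntegrableOn
      (fun p : ℝ => α + β * (Real.log p - Real.log (1 - p) + κ * p)) (Set.Ioo 0 1) :=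
    (intervalIntegrable_iff_integrableOn_Ioo_of_le zero_le_one).1 hg
  have hInt : IntegrableOn (fun p : ℝ => α + β * (Real.log (p / (1 - p)) + κ * p))
      (Set.Ioo 0 1) := hgOn.congr_fun hcongr.symm measurableSet_Ioo
  refine ⟨hInt, ?_⟩
  rw [setIntegral_congr_fun measurableSet_Ioo hcongr]
  -- FTC with antiderivative F
  set F : ℝ → ℝ := fun p => α * p + β * (p * Real.log p + (1 - p) * Real.log (1 - p) + κ * p ^ 2 / 2)
    with hF
  have hFcont : Continuous F := by
    apply (continuous_const.mul continuous_id).add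
    apply continuous_const.mul
    apply Continuous.add
    · exact Real.continuous_mul_log.add
        (Real.continuous_mul_log.comp (continuous_const.sub continuous_id))
    · exact (continuous_const.mul (continuous_pow 2)).div_const 2
  have hderiv : ∀ p ∈ Set.Ioo (0:ℝ) 1, HasDerivAt F
      (α + β * (Real.log p - Real.log (1 - p) + κ * p)) p := by
    intro p hp
    have hp0 : p ≠ 0 := ne_of_gt hp.1
    have h1p : (1:ℝ) - p ≠ 0 := by have := hp.2; intro h; linarith [sub_eq_zero.1 h]
    have d1 : HasDerivAt (fun x : ℝ => x * Real.log x) (Real.log p + 1) p :=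
      Real.hasDerivAt_mul_log hp0
    have d2 : HasDerivAt (fun x : ℝ => (1 - x) * Real.log (1 - x))
        (-(Real.log (1 - p) + 1)) p := by
      have := (Real.hasDerivAt_mul_log h1p).comp p
        (((hasDerivAt_id p).const_sub 1))
      exact this.congr_deriv (by ring)
    have d3 : HasDerivAt (fun x : ℝ => κ * x ^ 2 / 2) (κ * p) p := by
      have : HasDerivAt (fun x : ℝ => x ^ 2) (2 * p) p := by
        simpa using hasDerivAt_pow 2 p
      have := (this.const_mul κ).div_const 2
      exact this.congr_deriv (by ring)
    have d4 : HasDerivAt (fun x : ℝ => α * x) α p := by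
      simpa using (hasDerivAt_id p).const_mul α
    have := d4.add (((d1.add d2).add d3).const_mul β)
    exact this.congr_deriv (by ring)
  have hFTC := intervalIntegral.integral_eq_sub_of_hasDerivAt_of_le zero_le_one
    hFcont.continuousOn hderiv hg
  have hIoo : ∫ p in Set.Ioo (0:ℝ) 1, (α + β * (Real.log p - Real.log (1 - p) + κ * p)) =
      ∫ p in (0:ℝ)..1, (α + β * (Real.log p - Real.log (1 - p) + κ * p)) := by
    rw [intervalIntegral.integral_of_le zero_le_one, integral_Ioc_eq_integral_Ioo]
  rw [hIoo, hFTC, hF]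
  simp [Real.log_one]
  ring
end

section
/- Let (Ω, F, P) be a probability space, let η ∈ (0, 1/2), and let f : [0,1] → ℝ be nondecreasing and continuous. For each n ∈ ℕ let m_n ∈ ℕ satisfy m_n ≥ 2/η and m_n → ∞, and let Ŷ_{n,1}, …, Ŷ_{n,m_n−1} be real-valued random variables on Ω. For each ω ∈ Ω let (Ỹ_{n,1}(ω),…,Ỹ_{n,m_n−1}(ω)) be an isotonic regression of (Ŷ_{n,1}(ω),…,Ŷ_{n,m_n−1}(ω)), and let G̃_n(ω) denote the linear interpolant of the values Ỹ_{n,j}(ω) at the points j/m_n, j = 1,…,m_n−1. If the random variables M_n = max_{1≤j≤m_n−1} |Ŷ_{n,j} − f(j/m_n)| converge to 0 in probability, then sup_{p∈[η,1−η]} |G̃_n(p) − f(p)| converges to 0 in probability. -/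
open MeasureTheory Filter

lemma clamp_abs_aux (a b v x : ℝ) (hab : a ≤ b) (hv1 : a ≤ v) (hv2 : v ≤ b) :
    |v - max a (min b x)| ≤ |v - x| ∧ ((x < a ∨ b < x) → |v - max a (min b x)| < |v - x|) := by
  rcases lt_or_ge x a with h | h
  · have h1 : min b x = x := min_eq_right (h.le.trans hab)
    have h2 : max a x = a := max_eq_left h.le
    rw [h1, h2, abs_of_nonneg (by linarith), abs_of_nonneg (by linarith)]
    exact ⟨by linarith, fun _ => by linarith⟩
  rcases lt_or_ge b x with h' | h'
  · have h1 : min b x = b := min_eq_left h'.le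
    have h2 : max a b = b := max_eq_right hab
    rw [h1, h2, abs_of_nonpos (by linarith), abs_of_nonpos (by linarith)]
    exact ⟨by linarith, fun _ => by linarith⟩
  · have h1 : min b x = x := min_eq_right h'
    have h2 : max a x = x := max_eq_right h
    rw [h1, h2]
    exact ⟨le_refl _, fun hc => by rcases hc with hc | hc <;> linarith⟩

lemma isotonic_contract (N : ℕ) (v w u : ℕ → ℝ) (c : ℝ) (hc : 0 ≤ c)
    (hw : ∀ i j, 1 ≤ i → i ≤ j → j ≤ N → w i ≤ w j)
    (hu : ∀ i j, 1 ≤ i → i ≤ j → j ≤ N → u i ≤ u j)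
    (hmin : ∀ w' : ℕ → ℝ, (∀ i j, 1 ≤ i → i ≤ j → j ≤ N → w' i ≤ w' j) →
      ∑ j ∈ Finset.Icc 1 N, (v j - w j) ^ 2 ≤ ∑ j ∈ Finset.Icc 1 N, (v j - w' j) ^ 2)
    (hv : ∀ j ∈ Finset.Icc 1 N, |v j - u j| ≤ c) :
    ∀ j ∈ Finset.Icc 1 N, |w j - u j| ≤ c := by
  by_contra hcon
  push_neg at hcon
  obtain ⟨j0, hj0, hj0c⟩ := hcon
  set w' : ℕ → ℝ := fun j => max (u j - c) (min (u j + c) (w j)) with hw'def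
  have hw'mono : ∀ i j, 1 ≤ i → i ≤ j → j ≤ N → w' i ≤ w' j := by
    intro i j h1 h2 h3
    have := hu i j h1 h2 h3
    exact max_le_max (by linarith) (min_le_min (by linarith) (hw i j h1 h2 h3))
  have hbnd : ∀ j ∈ Finset.Icc 1 N, u j - c ≤ v j ∧ v j ≤ u j + c := by
    intro j hj
    have := abs_le.mp (hv j hj)
    exact ⟨by linarith [this.2], by linarith [this.1]⟩
  have hpt : ∀ j ∈ Finset.Icc 1 N, (v j - w' j) ^ 2 ≤ (v j - w j) ^ 2 := by
    intro j hj
    obtain ⟨h1, h2⟩ := hbnd j hj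
    have hcl := (clamp_abs_aux (u j - c) (u j + c) (v j) (w j) (by linarith) h1 h2).1
    rw [← sq_abs (v j - w' j), ← sq_abs (v j - w j)]
    exact pow_le_pow_left₀ (abs_nonneg _) hcl 2
  have hstrict : (v j0 - w' j0) ^ 2 < (v j0 - w j0) ^ 2 := by
    obtain ⟨h1, h2⟩ := hbnd j0 hj0
    have hout : w j0 < u j0 - c ∨ u j0 + c < w j0 := by
      rcases lt_abs.mp hj0c with h | h
      · right; linarith
      · left; linarith
    have hcl := (clamp_abs_aux (u j0 - c) (u j0 + c) (v j0) (w j0) (by linarith) h1 h2).2 hout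
    rw [← sq_abs (v j0 - w' j0), ← sq_abs (v j0 - w j0)]
    exact pow_lt_pow_left₀ hcl (abs_nonneg _) two_ne_zero
  have hlt := Finset.sum_lt_sum hpt ⟨j0, hj0, hstrict⟩
  linarith [hmin w' hw'mono]

set_option maxHeartbeats 1600000 in
/-- Theorem 3.2(ii) of the paper: uniform consistency on `[η, 1−η]` of the IOQR
estimator. If for each `n`, `ω` the values `Yt n · ω` are an isotonic regression of the
grid values `Y n · ω` over the indices `1,…,mₙ−1`, `G n ω` is the linear interpolant of
the `Yt n j ω` at the grid points `j/mₙ`, and the maximal error of `Y n j` against the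
nondecreasing continuous target `f` at the grid points converges to `0` in probability,
then the sup-error of `G n` over `[η, 1−η]` converges to `0` in probability. -/
theorem ioqr_estimator_uniform_consistency
    {Ω : Type*} [MeasurableSpace Ω] (P : Measure Ω) [IsProbabilityMeasure P]
    (η : ℝ) (hη : η ∈ Set.Ioo (0 : ℝ) (1 / 2))
    (f : ℝ → ℝ)
    (hf_mono : MonotoneOn f (Set.Icc 0 1))
    (hf_cont : ContinuousOn f (Set.Icc 0 1))
    (m : ℕ → ℕ)
    (hm_ge : ∀ n, 2 / η ≤ (m n : ℝ))
    (hm_tendsto : Tendsto m atTop atTop)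
    (Y Yt : ℕ → ℕ → Ω → ℝ)
    (hYt_mono : ∀ n, ∀ ω : Ω, ∀ i j, 1 ≤ i → i ≤ j → j ≤ m n - 1 → Yt n i ω ≤ Yt n j ω)
    (hYt_min : ∀ n, ∀ ω : Ω, ∀ w : ℕ → ℝ,
      (∀ i j, 1 ≤ i → i ≤ j → j ≤ m n - 1 → w i ≤ w j) →
      ∑ j ∈ Finset.Icc 1 (m n - 1), (Y n j ω - Yt n j ω) ^ 2 ≤
        ∑ j ∈ Finset.Icc 1 (m n - 1), (Y n j ω - w j) ^ 2)
    (G : ℕ → Ω → ℝ → ℝ)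
    (hG : ∀ n, ∀ ω : Ω, ∀ j, 1 ≤ j → j + 1 ≤ m n - 1 →
      ∀ x ∈ Set.Icc ((j : ℝ) / (m n : ℝ)) (((j : ℝ) + 1) / (m n : ℝ)),
        G n ω x = Yt n j ω + (x - (j : ℝ) / (m n : ℝ)) * (Yt n (j + 1) ω - Yt n j ω) /
          (((j : ℝ) + 1) / (m n : ℝ) - (j : ℝ) / (m n : ℝ)))
    (hconv : ∀ ε : ℝ, 0 < ε → Tendsto
      (fun n => P {ω | ∃ j ∈ Finset.Icc 1 (m n - 1), ε < |Y n j ω - f ((j : ℝ) / (m n : ℝ))|})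
      atTop (nhds 0)) :
    ∀ ε : ℝ, 0 < ε → Tendsto
      (fun n => P {ω | ∃ p ∈ Set.Icc η (1 - η), ε < |G n ω p - f p|})
      atTop (nhds 0) := by
  intro ε hε
  obtain ⟨hη0, hη2⟩ := hη
  -- uniform continuity of f on [0,1]
  have hUC : UniformContinuousOn f (Set.Icc 0 1) :=
    (isCompact_Icc : IsCompact (Set.Icc (0:ℝ) 1)).uniformContinuousOn_of_continuous hf_cont
  rw [Metric.uniformContinuousOn_iff] at hUC
  obtain ⟨δ, hδ, hδf⟩ := hUC (ε / 2) (by positivity)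
  set K : ℕ := ⌈1 / δ⌉₊ + 1 with hKdef
  have hK : 1 / δ < (K : ℝ) := by
    calc 1 / δ ≤ (⌈1 / δ⌉₊ : ℝ) := Nat.le_ceil _
    _ < (K : ℝ) := by rw [hKdef]; push_cast; linarith
  have hsub : ∀ n, K ≤ m n →
      {ω | ∃ p ∈ Set.Icc η (1 - η), ε < |G n ω p - f p|} ⊆
      {ω | ∃ j ∈ Finset.Icc 1 (m n - 1), ε / 2 < |Y n j ω - f ((j : ℝ) / (m n : ℝ))|} := by
    intro n hn ω hω
    by_contra hno
    simp only [Set.mem_setOf_eq] at hno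
    push_neg at hno
    obtain ⟨p, hp, hpe⟩ := hω
    have hm4 : (4 : ℝ) < (m n : ℝ) := by
      refine lt_of_lt_of_le ?_ (hm_ge n)
      rw [lt_div_iff₀ hη0]; linarith
    have hmpos : (0 : ℝ) < (m n : ℝ) := by linarith
    have hm5 : 5 ≤ m n := by
      have : (4 : ℕ) < m n := by exact_mod_cast hm4
      omega
    have hηm : 2 ≤ η * (m n : ℝ) := by
      have := (div_le_iff₀ hη0).mp (hm_ge n)
      linarith
    have hδm : 1 / (m n : ℝ) < δ := by
      have h1 : 1 / δ < (m n : ℝ) := lt_of_lt_of_le hK (by exact_mod_cast hn)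
      rw [div_lt_iff₀ hmpos]
      rw [div_lt_iff₀ hδ] at h1
      linarith
    -- the grid index
    set j : ℕ := ⌊p * (m n : ℝ)⌋₊ with hjdef
    have hpm2 : 2 ≤ p * (m n : ℝ) := by nlinarith [hp.1]
    have hj2 : 2 ≤ j := Nat.le_floor (by exact_mod_cast hpm2)
    have hj1 : 1 ≤ j := by omega
    have hjle : (j : ℝ) ≤ p * (m n : ℝ) := Nat.floor_le (by nlinarith [hp.1])
    have hjlt : p * (m n : ℝ) < (j : ℝ) + 1 := Nat.lt_floor_add_one _
    have hjub : (j : ℝ) ≤ (m n : ℝ) - 2 := by nlinarith [hp.2]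
    have hjm : j + 1 ≤ m n - 1 := by
      have h' : (j : ℝ) ≤ ((m n - 2 : ℕ) : ℝ) := by
        rw [Nat.cast_sub (by omega)]; push_cast; linarith
      have := Nat.cast_le.mp h'
      omega
    have hpmem : p ∈ Set.Icc ((j : ℝ) / (m n : ℝ)) (((j : ℝ) + 1) / (m n : ℝ)) := by
      constructor
      · rw [div_le_iff₀ hmpos]; nlinarith
      · rw [le_div_iff₀ hmpos]; nlinarith
    have hGval := hG n ω j hj1 hjm p hpmem
    -- isotonic contraction
    have humono : ∀ i k, 1 ≤ i → i ≤ k → k ≤ m n - 1 →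
        f ((i : ℝ) / (m n : ℝ)) ≤ f ((k : ℝ) / (m n : ℝ)) := by
      intro i k h1 h2 h3
      have hk1 : (k : ℝ) ≤ (m n : ℝ) := by
        have : k ≤ m n := by omega
        exact_mod_cast this
      have hik : (i : ℝ) ≤ (k : ℝ) := by exact_mod_cast h2
      exact hf_mono ⟨by positivity, (div_le_one hmpos).mpr (by linarith)⟩
        ⟨by positivity, (div_le_one hmpos).mpr hk1⟩ (by gcongr)
    have hYtb : ∀ k ∈ Finset.Icc 1 (m n - 1),
        |Yt n k ω - f ((k : ℝ) / (m n : ℝ))| ≤ ε / 2 :=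
      isotonic_contract (m n - 1) (fun k => Y n k ω) (fun k => Yt n k ω)
        (fun k => f ((k : ℝ) / (m n : ℝ))) (ε / 2) (by positivity)
        (hYt_mono n ω) humono (hYt_min n ω) hno
    have hb1 := abs_le.mp (hYtb j (Finset.mem_Icc.mpr ⟨hj1, by omega⟩))
    have hb2 := abs_le.mp (hYtb (j + 1) (Finset.mem_Icc.mpr ⟨by omega, hjm⟩))
    push_cast at hb2
    -- continuity estimates at the two grid points
    have hpIcc : p ∈ Set.Icc (0 : ℝ) 1 := ⟨by linarith [hp.1], by linarith [hp.2]⟩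
    have hjm1 : (j : ℝ) + 1 ≤ (m n : ℝ) := by linarith
    have hjIcc : (j : ℝ) / (m n : ℝ) ∈ Set.Icc (0 : ℝ) 1 :=
      ⟨by positivity, (div_le_one hmpos).mpr (by linarith)⟩
    have hj1Icc : ((j : ℝ) + 1) / (m n : ℝ) ∈ Set.Icc (0 : ℝ) 1 :=
      ⟨by positivity, (div_le_one hmpos).mpr hjm1⟩
    have hgap : ((j : ℝ) + 1) / (m n : ℝ) - (j : ℝ) / (m n : ℝ) = 1 / (m n : ℝ) := by
      field_simp
      ring
    have hd1 : |f ((j : ℝ) / (m n : ℝ)) - f p| < ε / 2 := by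
      have := hδf _ hjIcc _ hpIcc (by
        rw [Real.dist_eq, abs_of_nonpos (by linarith [hpmem.1])]
        have := hpmem.2
        linarith [hpmem.1, hpmem.2])
      rwa [Real.dist_eq] at this
    have hd2 : |f (((j : ℝ) + 1) / (m n : ℝ)) - f p| < ε / 2 := by
      have := hδf _ hj1Icc _ hpIcc (by
        rw [Real.dist_eq, abs_of_nonneg (by linarith [hpmem.2])]
        linarith [hpmem.1, hpmem.2])
      rwa [Real.dist_eq] at this
    -- G n ω p lies between Yt n j ω and Yt n (j+1) ω
    have hAB : Yt n j ω ≤ Yt n (j + 1) ω := hYt_mono n ω j (j + 1) hj1 (by omega) hjm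
    have hGlb : Yt n j ω ≤ G n ω p := by
      rw [hGval, hgap]
      have : 0 ≤ (p - (j : ℝ) / (m n : ℝ)) * (Yt n (j + 1) ω - Yt n j ω) / (1 / (m n : ℝ)) :=
        div_nonneg (mul_nonneg (by linarith [hpmem.1]) (by linarith)) (by positivity)
      linarith
    have hGub : G n ω p ≤ Yt n (j + 1) ω := by
      rw [hGval, hgap]
      have h1m : (0 : ℝ) < 1 / (m n : ℝ) := by positivity
      have : (p - (j : ℝ) / (m n : ℝ)) * (Yt n (j + 1) ω - Yt n j ω) / (1 / (m n : ℝ)) ≤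
          Yt n (j + 1) ω - Yt n j ω := by
        rw [div_le_iff₀ h1m]
        have ht : p - (j : ℝ) / (m n : ℝ) ≤ 1 / (m n : ℝ) := by
          linarith [hpmem.2, hgap]
        have hBA : (0 : ℝ) ≤ Yt n (j + 1) ω - Yt n j ω := by linarith
        have := mul_le_mul_of_nonneg_right ht hBA
        linarith
      linarith
    -- conclude
    have hfin : |G n ω p - f p| ≤ ε := by
      rw [abs_le]
      constructor
      · have h1 := abs_le.mp hd1.le
        linarith [hb1.1, h1.1, h1.2]
      · have h2 := abs_le.mp hd2.le
        linarith [hb2.2, h2.1, h2.2]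
    linarith
  have h0 := hconv (ε / 2) (by positivity)
  refine tendsto_of_tendsto_of_tendsto_of_le_of_le' tendsto_const_nhds h0
    (Eventually.of_forall fun n => zero_le) ?_
  filter_upwards [hm_tendsto.eventually (eventually_ge_atTop K)] with n hn
  exact measure_mono (hsub n hn)
end
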